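/- For the d-inflated measurements {M'_k} and their submeasurements {C'_k} constructed from a set {M_k} on the original graph satisfying the even-occurrence condition, the pair family {(M'_k, C'_k)} satisfies the distance-d parity condition (Eq. 8) at every power vertex: for each power vertex u and each assignment σ of Pauli symbols to the ball of radius d around u, the number of k with M'_k|_{B_d(u)} = σ and (C'_k)_u ≠ I is even. -/
import Mathlib


open scoped Classical

inductive Pauli | I | X | Y | Z
deriving DecidableEq

noncomputable def pauliMat : Pauli → Matrix (Fin 2) (Fin 2) ℂ
  | Pauli.I => 1
  | Pauli.X => !![0, 1; 1, 0]
  | Pauli.Y => !![0, -Complex.I; Complex.I, 0]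
  | Pauli.Z => !![1, 0; 0, -1]

noncomputable def pauliProd {V : Type} [Fintype V] [DecidableEq V] (σ : V → Pauli) :
    Matrix (V → Fin 2) (V → Fin 2) ℂ :=
  fun f g => ∏ v, pauliMat (σ v) (f v) (g v)

noncomputable def graphGen {V : Type} [Fintype V] [DecidableEq V] (G : SimpleGraph V) (v : V) :
    Matrix (V → Fin 2) (V → Fin 2) ℂ :=
  pauliProd (fun u => if u = v then Pauli.X else if G.Adj u v then Pauli.Z else Pauli.I)

noncomputable def graphState {V : Type} [Fintype V] [DecidableEq V] (G : SimpleGraph V) :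
    (V → Fin 2) → ℂ :=
  fun f => (-1 : ℂ) ^ (∑ e ∈ G.edgeFinset,
      Sym2.lift ⟨fun u v => (f u : ℕ) * (f v : ℕ), fun u v => Nat.mul_comm _ _⟩ e) /
    (Real.sqrt (2 ^ Fintype.card V) : ℂ)

noncomputable def expVal {V : Type} [Fintype V] [DecidableEq V]
    (ψ : (V → Fin 2) → ℂ) (P : Matrix (V → Fin 2) (V → Fin 2) ℂ) : ℂ :=
  ∑ f, ∑ g, (starRingEnd ℂ) (ψ f) * P f g * ψ g

/-- The original graph on `V` determined by an oriented edge list `e`. -/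
def origGraph {V : Type} (m : ℕ) (e : Fin m → V × V) : SimpleGraph V :=
  SimpleGraph.fromRel (fun u v => ∃ j, e j = (u, v))

/-- Adjacency seed relation of the `d`-inflated graph: each oriented edge `e j` is
replaced by a chain of `2d` chain vertices `(j, 0), …, (j, 2d - 1)` joining its
endpoints. -/
def inflAdj {V : Type} (m d : ℕ) (e : Fin m → V × V) :
    (V ⊕ (Fin m × Fin (2 * d))) → (V ⊕ (Fin m × Fin (2 * d))) → Prop
  | Sum.inl u, Sum.inr (j, r) =>
      ((e j).1 = u ∧ (r : ℕ) = 0) ∨ ((e j).2 = u ∧ (r : ℕ) = 2 * d - 1)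
  | Sum.inr (j, r), Sum.inr (j', r') => j = j' ∧ (r : ℕ) + 1 = (r' : ℕ)
  | _, _ => False

/-- The `d`-inflated graph. -/
def inflGraph {V : Type} (m d : ℕ) (e : Fin m → V × V) :
    SimpleGraph (V ⊕ (Fin m × Fin (2 * d))) :=
  SimpleGraph.fromRel (inflAdj m d e)

/-- The stabilizer generator of the inflated graph state at the chain vertex of
edge `j` with (0-indexed) position `r`; `1` if `r` is out of range. -/
noncomputable def chainGen {V : Type} [Fintype V] [DecidableEq V] (m d : ℕ)
    (e : Fin m → V × V) (j : Fin m) (r : ℕ) :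
    Matrix ((V ⊕ (Fin m × Fin (2 * d))) → Fin 2) ((V ⊕ (Fin m × Fin (2 * d))) → Fin 2) ℂ :=
  if h : r < 2 * d then graphGen (inflGraph m d e) (Sum.inr (j, ⟨r, h⟩)) else 1

/-- The inflated generator element
`f_u = g'_u ∏_{(u,v) ∈ E} ∏_{s=1}^{d} g'_{(2s)_{(u,v)}}`; the chain vertex at
distance `2s` from `u` has 0-indexed position `2s - 1` if `e j = (u, v)` and
`2d - 2s` if `e j = (v, u)`. -/
noncomputable def inflGen {V : Type} [Fintype V] [DecidableEq V] (m d : ℕ)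
    (e : Fin m → V × V) (u : V) :
    Matrix ((V ⊕ (Fin m × Fin (2 * d))) → Fin 2) ((V ⊕ (Fin m × Fin (2 * d))) → Fin 2) ℂ :=
  graphGen (inflGraph m d e) (Sum.inl u) *
    ((List.finRange m).map (fun j =>
      ((List.range d).map (fun s =>
        if (e j).1 = u then chainGen m d e j (2 * s + 1)
        else if (e j).2 = u then chainGen m d e j (2 * d - 2 * s - 2)
        else 1)).prod)).prod

/-- The inflated measurement: the original Pauli on power vertices, `X` on all
chain vertices. -/
def inflMeas {V : Type} {m d : ℕ} (M : V → Pauli) : (V ⊕ (Fin m × Fin (2 * d))) → Pauli :=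
  Sum.elim M (fun _ => Pauli.X)


lemma walk_lb {V : Type} {G : SimpleGraph V} (f : V → ℕ)
    (hf : ∀ x y, G.Adj x y → f y ≤ f x + 1) :
    ∀ {a b : V} (p : G.Walk a b), f b ≤ f a + p.length := by
  intro a b p
  induction p with
  | nil => simp
  | @cons a c b h p ih =>
      have h1 := hf _ _ h
      simp only [SimpleGraph.Walk.length_cons]
      omega

lemma power_far {V : Type} [DecidableEq V] (m d : ℕ) (hd : 0 < d) (e : Fin m → V × V)
    (hloop : ∀ j, (e j).1 ≠ (e j).2)
    (hconn : (inflGraph m d e).Connected)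
    (u v : V) (hv : v ≠ u) :
    d < (inflGraph m d e).dist (Sum.inl u) (Sum.inl v) := by
  classical
  set f : (V ⊕ (Fin m × Fin (2 * d))) → ℕ := fun w =>
    match w with
    | Sum.inl x => if x = u then 0 else d + 1
    | Sum.inr (j, r) =>
        if (e j).1 = u then min ((r : ℕ) + 1) (d + 1)
        else if (e j).2 = u then min (2 * d - (r : ℕ)) (d + 1)
        else d + 1
    with hfdef
  have haux : ∀ x y, inflAdj m d e x y → f y ≤ f x + 1 ∧ f x ≤ f y + 1 := by
    rintro (x | ⟨j, r⟩) (y | ⟨j', r'⟩) h <;> simp only [inflAdj] at h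
    · have hr' := r'.isLt
      simp only [hfdef]
      rcases h with ⟨h1, h2⟩ | ⟨h1, h2⟩
      · subst h1
        by_cases ha : (e j').1 = u
        · simp [ha, h2] <;> omega
        · by_cases hb : (e j').2 = u
          · simp [ha, hb, h2] <;> omega
          · simp [ha, hb]
      · subst h1
        by_cases ha : (e j').1 = u
        · have hne : (e j').2 ≠ u := fun h => hloop j' (ha.trans h.symm)
          simp [ha, hne, h2] <;> omega
        · by_cases hb : (e j').2 = u
          · simp [ha, hb, h2] <;> omega
          · simp [ha, hb]
    · obtain ⟨h1, h2⟩ := h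
      subst h1
      have hr' := r'.isLt
      simp only [hfdef]
      by_cases ha : (e j).1 = u <;> by_cases hb : (e j).2 = u <;>
        simp [ha, hb] <;> omega
  have hf : ∀ x y, (inflGraph m d e).Adj x y → f y ≤ f x + 1 := by
    intro x y hxy
    rw [inflGraph, SimpleGraph.fromRel_adj] at hxy
    rcases hxy.2 with h | h
    · exact (haux _ _ h).1
    · exact (haux _ _ h).2
  obtain ⟨p, hp⟩ := hconn.exists_walk_length_eq_dist (Sum.inl u) (Sum.inl v)
  have hwb := walk_lb f hf p
  have h0 : f (Sum.inl u) = 0 := by simp [hfdef]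
  have h1 : f (Sum.inl v) = d + 1 := by simp [hfdef, hv]
  omega

/-- Lemma 4: the inflated measurement/submeasurement pairs satisfy the distance-`d`
parity condition (Eq. 8) at every power vertex `u`: for each Pauli pattern `σ` on
the radius-`d` ball around `u`, the number of `k` with `M' k` matching `σ` on the
ball and `(C' k)_u ≠ I` is even. -/
theorem stmt12 {V : Type} [Fintype V] [LinearOrder V] (m d N : ℕ) (hd : 0 < d)
    (e : Fin m → V × V)
    (hloop : ∀ j, (e j).1 ≠ (e j).2)
    (hinj : Function.Injective e)
    (hor : ∀ j j', e j ≠ ((e j').2, (e j').1))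
    (hconn : (inflGraph m d e).Connected)
    (M : Fin N → V → Pauli)
    (heven : ∀ (v : V) (σ : Pauli), σ ≠ Pauli.I →
      Even (Finset.univ.filter (fun k => M k v = σ)).card)
    (C : Fin N → (V ⊕ (Fin m × Fin (2 * d))) → Pauli)
    (hC : ∀ k (u : V), C k (Sum.inl u) = M k u)
    (hsub : ∀ k w, C k w = Pauli.I ∨ C k w = inflMeas (M k) w) :
    ∀ (u : V) (σ : (V ⊕ (Fin m × Fin (2 * d))) → Pauli),
      Even ((Finset.univ.filter (fun k =>
        (∀ w, (inflGraph m d e).dist (Sum.inl u) w ≤ d → inflMeas (M k) w = σ w) ∧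
        C k (Sum.inl u) ≠ Pauli.I)).card) := by
  intro u σ
  by_cases h1 : σ (Sum.inl u) = Pauli.I
  · have hemp : (Finset.univ.filter (fun k =>
        (∀ w, (inflGraph m d e).dist (Sum.inl u) w ≤ d → inflMeas (M k) w = σ w) ∧
        C k (Sum.inl u) ≠ Pauli.I)) = ∅ := by
      rw [Finset.filter_eq_empty_iff]
      rintro k - ⟨ha, hb⟩
      have := ha (Sum.inl u) (by rw [SimpleGraph.dist_self]; exact Nat.zero_le _)
      rw [h1] at this
      simp only [inflMeas, Sum.elim_inl] at this
      exact hb ((hC k u).trans this)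
    rw [hemp]
    simp
  · by_cases h2 : ∃ p : Fin m × Fin (2 * d),
        (inflGraph m d e).dist (Sum.inl u) (Sum.inr p) ≤ d ∧ σ (Sum.inr p) ≠ Pauli.X
    · obtain ⟨p, hpd, hpx⟩ := h2
      have hemp : (Finset.univ.filter (fun k =>
          (∀ w, (inflGraph m d e).dist (Sum.inl u) w ≤ d → inflMeas (M k) w = σ w) ∧
          C k (Sum.inl u) ≠ Pauli.I)) = ∅ := by
        rw [Finset.filter_eq_empty_iff]
        rintro k - ⟨ha, -⟩
        have := ha (Sum.inr p) hpd
        simp only [inflMeas, Sum.elim_inr] at this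
        exact hpx this.symm
      rw [hemp]
      simp
    · push_neg at h2
      have key : (Finset.univ.filter (fun k =>
          (∀ w, (inflGraph m d e).dist (Sum.inl u) w ≤ d → inflMeas (M k) w = σ w) ∧
          C k (Sum.inl u) ≠ Pauli.I)) =
          Finset.univ.filter (fun k => M k u = σ (Sum.inl u)) := by
        ext k
        simp only [Finset.mem_filter, Finset.mem_univ, true_and]
        constructor
        · rintro ⟨ha, -⟩
          have := ha (Sum.inl u) (by rw [SimpleGraph.dist_self]; exact Nat.zero_le _)
          simpa [inflMeas] using this
        · intro hm
          refine ⟨?_, ?_⟩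
          · rintro (v | p) hw
            · by_cases hvu : v = u
              · subst hvu
                simpa [inflMeas] using hm
              · exact absurd hw (by
                  have := power_far m d hd e hloop hconn u v hvu
                  omega)
            · simp [inflMeas, h2 p hw]
          · rw [hC, hm]
            exact h1
      rw [key]
      exact heven u _ h1
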